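/- arXiv:2301.12733 — 3 statements merged into one kernel-verified Lean document; each statement's English description precedes it below -/
import Mathlib

section
/- For every problem P and every first-order problem Q, if Q is Weihrauch reducible to P then Q is strongly Weihrauch reducible to the first-order part ¹P of P. -/
open Classical

/-- A Turing functional, presented by a monotone computable map on finite prefixes
of the oracle. -/
structure Functional where
  eval : List ℕ → ℕ → Option ℕ
  mono : ∀ σ τ x y, σ <+: τ → eval σ x = some y → eval τ x = some y
  comp : Computable₂ eval

/-- The finite initial segment of `f` of length `k`. -/
def initSeg (f : ℕ → ℕ) (k : ℕ) : List ℕ := (List.range k).map f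

/-- `Φ(f)(x)` converges with value `y`. -/
def Functional.conv (Φ : Functional) (f : ℕ → ℕ) (x y : ℕ) : Prop :=
  ∃ k, Φ.eval (initSeg f k) x = some y

/-- Total application: `Φ(f) = g`. -/
def Functional.Total (Φ : Functional) (f g : ℕ → ℕ) : Prop :=
  ∀ x, Φ.conv f x (g x)

/-- The Turing join of two elements of Baire space. -/
def join (f g : ℕ → ℕ) : ℕ → ℕ := fun n => if n % 2 = 0 then f (n / 2) else g (n / 2)

/-- The embedding of `ℕ` into Baire space: `n` is identified with `n,0,0,0,…`. -/
def natSeq (n : ℕ) : ℕ → ℕ := fun i => if i = 0 then n else 0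

/-- A problem: a partial multifunction on Baire space, given by its domain
(the set of instances) and, for each instance, its set of solutions. -/
structure Problem where
  dom : Set (ℕ → ℕ)
  sol : (ℕ → ℕ) → Set (ℕ → ℕ)

/-- Weihrauch reducibility `Q ≤_W P`. -/
def WRed (Q P : Problem) : Prop :=
  ∃ Φ Ψ : Functional, ∀ f ∈ Q.dom, ∃ h, Φ.Total f h ∧ h ∈ P.dom ∧
    ∀ g ∈ P.sol h, ∃ y, Ψ.Total (join f g) y ∧ y ∈ Q.sol f

/-- Strong Weihrauch reducibility `Q ≤_sW P`: the backward functional only sees the solution. -/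
def SRed (Q P : Problem) : Prop :=
  ∃ Φ Ψ : Functional, ∀ f ∈ Q.dom, ∃ h, Φ.Total f h ∧ h ∈ P.dom ∧
    ∀ g ∈ P.sol h, ∃ y, Ψ.Total g y ∧ y ∈ Q.sol f

/-- Weihrauch equivalence. -/
def WEquiv (Q P : Problem) : Prop := WRed Q P ∧ WRed P Q

/-- Strong Weihrauch equivalence. -/
def SEquiv (Q P : Problem) : Prop := SRed Q P ∧ SRed P Q

/-- A problem is first-order if all its solutions are natural numbers
(under the identification of `n` with `natSeq n`). -/
def FirstOrder (P : Problem) : Prop :=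
  ∀ f ∈ P.dom, ∀ g ∈ P.sol f, ∃ n, g = natSeq n

/-- The code of a functional as an element of Baire space (the graph of its
prefix-evaluation function). -/
def Functional.graph (Φ : Functional) : ℕ → ℕ :=
  fun n => Encodable.encode (Φ.eval (Denumerable.ofNat (List ℕ) n.unpair.1) n.unpair.2)

/-- The first-order part `¹P` of a problem `P`: instances are (codes of) triples
`⟨f,Φ,Ψ⟩` with `Φ(f) ∈ dom(P)` and `Ψ(f,g)(0)↓` for all `g ∈ P(Φ(f))`; the
solutions are all values `Ψ(f,g)(0)` for `g ∈ P(Φ(f))`. -/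
def FOPart (P : Problem) : Problem where
  dom := { h | ∃ (f : ℕ → ℕ) (Φ Ψ : Functional), h = join f (join Φ.graph Ψ.graph) ∧
    ∃ p, Φ.Total f p ∧ p ∈ P.dom ∧ ∀ g ∈ P.sol p, ∃ y, Ψ.conv (join f g) 0 y }
  sol h := { w | ∃ (f : ℕ → ℕ) (Φ Ψ : Functional) (p g : ℕ → ℕ) (y : ℕ),
    h = join f (join Φ.graph Ψ.graph) ∧ Φ.Total f p ∧ p ∈ P.dom ∧ g ∈ P.sol p ∧
    Ψ.conv (join f g) 0 y ∧ w = natSeq y }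

/-- `P` is computably true: every instance computes one of its solutions. -/
def ComputablyTrue (P : Problem) : Prop :=
  ∀ f ∈ P.dom, ∃ g ∈ P.sol f, ∃ Φ : Functional, Φ.Total f g

/-- `P` is uniformly computably true: a single functional solves every instance. -/
def UnifCompTrue (P : Problem) : Prop :=
  ∃ Φ : Functional, ∀ f ∈ P.dom, ∃ g, Φ.Total f g ∧ g ∈ P.sol f

/-- `σ` is a finite initial segment of some `P`-solution to `f`. -/
def Extendible (P : Problem) (f : ℕ → ℕ) (σ : List ℕ) : Prop :=
  ∃ g ∈ P.sol f, σ = initSeg g σ.length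

/-- `P` is undiagonalizable: the set of strings extendible to a solution is
uniformly decidable from the instance. -/
def Undiag (P : Problem) : Prop :=
  ∃ Γ : Functional, ∀ f ∈ P.dom, ∀ σ : List ℕ,
    (Extendible P f σ → Γ.conv f (Encodable.encode σ) 1) ∧
    (¬ Extendible P f σ → Γ.conv f (Encodable.encode σ) 0)

-- auxiliary lemmas to insert before the theorem

lemma initSeg_prefix (f : ℕ → ℕ) {k k' : ℕ} (h : k ≤ k') :
    initSeg f k <+: initSeg f k' := by
  have : initSeg f k = (initSeg f k').take k := by
    simp [initSeg, ← List.map_take, List.take_range, Nat.min_eq_left h]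
  rw [this]
  exact List.take_prefix _ _

lemma Functional.conv_unique {Φ : Functional} {f : ℕ → ℕ} {x y y' : ℕ}
    (h1 : Φ.conv f x y) (h2 : Φ.conv f x y') : y = y' := by
  obtain ⟨k, hk⟩ := h1
  obtain ⟨k', hk'⟩ := h2
  have e1 := Φ.mono _ _ _ _ (initSeg_prefix f (le_max_left k k')) hk
  have e2 := Φ.mono _ _ _ _ (initSeg_prefix f (le_max_right k k')) hk'
  rw [e1] at e2
  exact Option.some.inj e2

lemma Functional.total_unique {Φ : Functional} {f g g' : ℕ → ℕ}
    (h1 : Φ.Total f g) (h2 : Φ.Total f g') : g = g' :=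
  funext fun x => Functional.conv_unique (h1 x) (h2 x)

lemma join_left (f g : ℕ → ℕ) (n : ℕ) : join f g (2 * n) = f n := by
  have h1 : 2 * n % 2 = 0 := Nat.mul_mod_right 2 n
  have h2 : 2 * n / 2 = n := by omega
  simp [join, h1, h2]

lemma join_right (f g : ℕ → ℕ) (n : ℕ) : join f g (2 * n + 1) = g n := by
  have h1 : (2 * n + 1) % 2 = 1 := by omega
  have h2 : (2 * n + 1) / 2 = n := by omega
  simp [join, h1, h2]

lemma join_inj {f g f' g' : ℕ → ℕ} (h : join f g = join f' g') :
    f = f' ∧ g = g' := by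
  constructor
  · funext n
    have := congrFun h (2 * n)
    rwa [join_left, join_left] at this
  · funext n
    have := congrFun h (2 * n + 1)
    rwa [join_right, join_right] at this

lemma Functional.graph_eq {Φ Φ' : Functional} (h : Φ.graph = Φ'.graph) :
    ∀ σ x, Φ.eval σ x = Φ'.eval σ x := by
  intro σ x
  have := congrFun h (Nat.pair (Encodable.encode σ) x)
  simp only [Functional.graph, Nat.unpair_pair, Denumerable.ofNat_encode] at this
  exact Encodable.encode_injective this

lemma Functional.conv_of_graph_eq {Φ Φ' : Functional} (h : Φ.graph = Φ'.graph)
    {f : ℕ → ℕ} {x y : ℕ} (hc : Φ.conv f x y) : Φ'.conv f x y := by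
  obtain ⟨k, hk⟩ := hc
  exact ⟨k, (Functional.graph_eq h _ _) ▸ hk⟩

lemma Functional.total_of_graph_eq {Φ Φ' : Functional} (h : Φ.graph = Φ'.graph)
    {f g : ℕ → ℕ} (hc : Φ.Total f g) : Φ'.Total f g :=
  fun x => Functional.conv_of_graph_eq h (hc x)

lemma initSeg_get? (f : ℕ → ℕ) (x : ℕ) : (initSeg f (x + 1))[x]? = some (f x) := by
  simp [initSeg]

/-- The identity functional. -/
def idFun : Functional where
  eval σ x := σ[x]?
  mono σ τ x y h hx := by
    obtain ⟨t, rfl⟩ := h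
    show (σ ++ t)[x]? = some y
    rw [List.getElem?_append_left (List.getElem?_eq_some_iff.1 hx).1]
    exact hx
  comp := Primrec.list_getElem?.to_comp

lemma idFun_total (g : ℕ → ℕ) : idFun.Total g g :=
  fun x => ⟨x + 1, initSeg_get? g x⟩

lemma Functional.graph_computable (Φ : Functional) : Computable Φ.graph :=
  Computable.encode.comp
    (Φ.comp.comp
      ((Computable.ofNat (List ℕ)).comp
        ((Primrec.fst.comp Primrec.unpair).to_comp))
      ((Primrec.snd.comp Primrec.unpair).to_comp))

/-- The forward functional sending `f` to `join f c` for a fixed computable `c`. -/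
def fwdFun (c : ℕ → ℕ) (hc : Computable c) : Functional where
  eval σ x := if x % 2 = 0 then σ[x / 2]? else some (c (x / 2))
  mono σ τ x y h := by
    show (if x % 2 = 0 then _ else _) = some y → (if x % 2 = 0 then _ else _) = some y
    split_ifs with h2
    · intro hx
      obtain ⟨t, rfl⟩ := h
      rw [List.getElem?_append_left (List.getElem?_eq_some_iff.1 hx).1]
      exact hx
    · exact id
  comp := by
    have : Computable₂ fun (σ : List ℕ) (x : ℕ) =>
        cond (decide (x % 2 = 0)) (σ[x / 2]?) (some (c (x / 2))) := by
      apply Computable.cond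
      · exact (Primrec.eq.comp (Primrec.nat_mod.comp Primrec.snd (Primrec.const 2))
          (Primrec.const 0)).decide.to_comp
      · exact Primrec.list_getElem?.to_comp.comp Computable.fst
          ((Primrec.nat_div.comp Primrec.snd (Primrec.const 2)).to_comp)
      · exact Computable.option_some.comp
          (hc.comp ((Primrec.nat_div.comp Primrec.snd (Primrec.const 2)).to_comp))
    exact this.of_eq fun p => by by_cases h : p.2 % 2 = 0 <;> simp [h]

lemma fwdFun_total (c : ℕ → ℕ) (hc : Computable c) (f : ℕ → ℕ) :
    (fwdFun c hc).Total f (join f c) := by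
  intro x
  by_cases h2 : x % 2 = 0
  · refine ⟨x / 2 + 1, ?_⟩
    show (if x % 2 = 0 then _ else _) = _
    rw [if_pos h2, initSeg_get?]
    simp [join, h2]
  · refine ⟨0, ?_⟩
    show (if x % 2 = 0 then _ else _) = _
    rw [if_neg h2]
    simp [join, h2]

lemma join_computable {f g : ℕ → ℕ} (hf : Computable f) (hg : Computable g) :
    Computable (join f g) := by
  have : Computable fun n =>
      cond (decide (n % 2 = 0)) (f (n / 2)) (g (n / 2)) := by
    apply Computable.cond
    · exact (Primrec.eq.comp (Primrec.nat_mod.comp Primrec.id (Primrec.const 2))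
        (Primrec.const 0)).decide.to_comp
    · exact hf.comp ((Primrec.nat_div.comp Primrec.id (Primrec.const 2)).to_comp)
    · exact hg.comp ((Primrec.nat_div.comp Primrec.id (Primrec.const 2)).to_comp)
  exact this.of_eq fun n => by by_cases h : n % 2 = 0 <;> simp [join, h]

theorem first_order_red_implies_strong_red_to_FOPart (P Q : Problem)
    (hQ : FirstOrder Q) (h : WRed Q P) : SRed Q (FOPart P) := by
  obtain ⟨Φ, Ψ, hred⟩ := h
  have hc : Computable (join Φ.graph Ψ.graph) :=
    join_computable Φ.graph_computable Ψ.graph_computable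
  refine ⟨fwdFun _ hc, idFun, ?_⟩
  intro f hf
  obtain ⟨p, hΦp, hpdom, hsol⟩ := hred f hf
  refine ⟨join f (join Φ.graph Ψ.graph), fwdFun_total _ hc f, ?_, ?_⟩
  · exact ⟨f, Φ, Ψ, rfl, p, hΦp, hpdom, fun g hg => by
      obtain ⟨y, hy, _⟩ := hsol g hg
      exact ⟨y 0, hy 0⟩⟩
  · rintro w ⟨f', Φ', Ψ', p', g, y, heq, hΦ'p', _, hg, hconv, rfl⟩
    obtain ⟨hf_eq, hj_eq⟩ := join_inj heq
    obtain ⟨hΦ_eq, hΨ_eq⟩ := join_inj hj_eq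
    subst hf_eq
    -- p' = p
    have hΦp' : Φ.Total f p' := Functional.total_of_graph_eq hΦ_eq.symm hΦ'p'
    have hpp : p' = p := Functional.total_unique hΦp' hΦp
    subst hpp
    obtain ⟨y', hy', hy'Q⟩ := hsol g hg
    have hconv2 : Ψ.conv (join f g) 0 y := Functional.conv_of_graph_eq hΨ_eq.symm hconv
    have hyy : y = y' 0 := Functional.conv_unique hconv2 (hy' 0)
    obtain ⟨n, hn⟩ := hQ f hf y' hy'Q
    have : natSeq y = y' := by
      rw [hyy, hn]
      simp [natSeq]
    rw [this]
    exact ⟨y', idFun_total y', hy'Q⟩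
end

section
/- For every k ≥ 1, the Ramsey problem for k-colorings of singletons RT¹_k is Weihrauch equivalent to the Bolzano–Weierstrass problem BWT_k. -/
open Classical

/-- `RT¹_k`: instances are colorings `c : ℕ → k`; solutions are (characteristic
functions of) infinite sets on which `c` is constant. -/
def RT1 (k : ℕ) : Problem where
  dom := { c | ∀ x, c x < k }
  sol c := { h | (∀ x, h x ≤ 1) ∧ {x | h x = 1}.Infinite ∧ ∃ i, ∀ x, h x = 1 → c x = i }

/-- `BWT_k`: instances are colorings `c : ℕ → k`; solutions are the colors
attained infinitely often. -/
def BWT (k : ℕ) : Problem where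
  dom := { c | ∀ x, c x < k }
  sol c := { w | ∃ i, i < k ∧ {x | c x = i}.Infinite ∧ w = natSeq i }


section AuxRT1BWT

lemma initSeg_length (f : ℕ → ℕ) (k : ℕ) : (initSeg f k).length = k := by simp [initSeg]

lemma initSeg_getD (f : ℕ → ℕ) {i k : ℕ} (h : i < k) : (initSeg f k).getD i 0 = f i := by
  simp [initSeg, List.getD_eq_getElem?_getD, List.getElem?_map, List.getElem?_range h]

lemma prefix_getD {σ τ : List ℕ} (h : σ <+: τ) {i : ℕ} (hi : i < σ.length) :
    τ.getD i 0 = σ.getD i 0 := by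
  obtain ⟨t, rfl⟩ := h
  simp [List.getD_eq_getElem?_getD, List.getElem?_append, hi]

lemma join_even (f g : ℕ → ℕ) (x : ℕ) : join f g (2*x) = f x := by
  have h1 : (2*x) % 2 = 0 := by omega
  have h2 : (2*x)/2 = x := by omega
  simp [join, h1, h2]

lemma join_odd (f g : ℕ → ℕ) (x : ℕ) : join f g (2*x+1) = g x := by
  have h1 : (2*x+1) % 2 = 1 := by omega
  have h2 : (2*x+1)/2 = x := by omega
  simp [join, h1, h2]

/-- The identity functional. -/
def PhiId : Functional where
  eval σ x := σ[x]?
  mono := by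
    rintro σ τ x y ⟨t, rfl⟩ h
    have h' : σ[x]? = some y := h
    show (σ ++ t)[x]? = some y
    have hx : x < σ.length := by
      by_contra hx
      rw [List.getElem?_eq_none (Nat.le_of_not_lt hx)] at h'
      simp at h'
    rwa [List.getElem?_append_left hx]
  comp := Primrec.list_getElem?.to_comp

lemma PhiId_total (f : ℕ → ℕ) : PhiId.Total f f := by
  intro x
  refine ⟨x+1, ?_⟩
  show (initSeg f (x+1))[x]? = some (f x)
  simp [initSeg]

/-- Backward functional for RT1 ≤ BWT. -/
def psi1eval (σ : List ℕ) (x : ℕ) : Option ℕ :=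
  if 2*x < σ.length ∧ 1 < σ.length then
    some (if σ.getD (2*x) 0 = σ.getD 1 0 then 1 else 0)
  else none

def Psi1 : Functional where
  eval := psi1eval
  mono := by
    rintro σ τ x y hpre h
    have hlen := hpre.length_le
    unfold psi1eval at h ⊢
    by_cases hc : 2*x < σ.length ∧ 1 < σ.length
    · rw [if_pos hc] at h
      rw [if_pos ⟨lt_of_lt_of_le hc.1 hlen, lt_of_lt_of_le hc.2 hlen⟩,
        prefix_getD hpre hc.1, prefix_getD hpre hc.2]
      exact h
    · rw [if_neg hc] at h; simp at h
  comp := by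
    apply Primrec₂.to_comp
    have hlen : Primrec fun p : List ℕ × ℕ => p.1.length :=
      Primrec.list_length.comp Primrec.fst
    have h2x : Primrec fun p : List ℕ × ℕ => 2 * p.2 :=
      Primrec.nat_mul.comp (Primrec.const 2) Primrec.snd
    have hA : Primrec fun p : List ℕ × ℕ => p.1.getD (2*p.2) 0 :=
      (Primrec.list_getD 0).comp Primrec.fst h2x
    have hB : Primrec fun p : List ℕ × ℕ => p.1.getD 1 0 :=
      (Primrec.list_getD 0).comp Primrec.fst (Primrec.const 1)
    have hval : Primrec fun p : List ℕ × ℕ =>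
        (if p.1.getD (2*p.2) 0 = p.1.getD 1 0 then 1 else 0 : ℕ) :=
      Primrec.ite (Primrec.eq.comp hA hB) (Primrec.const 1) (Primrec.const 0)
    have hcond : PrimrecPred fun p : List ℕ × ℕ => 2*p.2 < p.1.length ∧ 1 < p.1.length :=
      (Primrec.nat_lt.comp h2x hlen).and (Primrec.nat_lt.comp (Primrec.const 1) hlen)
    exact Primrec.ite hcond (Primrec.option_some.comp hval) (Primrec.const none)

/-- Backward functional for BWT ≤ RT1. -/
def psi2eval (σ : List ℕ) (n : ℕ) : Option ℕ :=
  if n = 0 then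
    (if (List.range σ.length).findIdx (fun x => σ.getD (2*x+1) 0 == 1) < σ.length then
      some (σ.getD (2 * (List.range σ.length).findIdx (fun x => σ.getD (2*x+1) 0 == 1)) 0)
    else none)
  else some 0

def Psi2 : Functional where
  eval := psi2eval
  mono := by
    rintro σ τ n y hpre h
    have hlen := hpre.length_le
    unfold psi2eval at h ⊢
    by_cases hn : n = 0
    · rw [if_pos hn] at h ⊢
      set j := (List.range σ.length).findIdx (fun x => σ.getD (2*x+1) 0 == 1) with hj
      by_cases hjl : j < σ.length
      · rw [if_pos hjl] at h
        have hlen' : j < (List.range σ.length).length := by simpa using hjl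
        have hspec := (List.findIdx_eq hlen').mp hj.symm
        simp only [List.getElem_range] at hspec
        have hpσ : σ.getD (2*j+1) 0 = 1 := by
          have := hspec.1
          simpa using this
        have h2j : 2*j+1 < σ.length := by
          by_contra hcon
          rw [List.getD_eq_default _ _ (Nat.le_of_not_lt hcon)] at hpσ
          exact absurd hpσ (by norm_num)
        have hjτ : j < (List.range τ.length).length := by
          simp only [List.length_range]
          exact lt_of_lt_of_le hjl hlen
        have hfindτ : (List.range τ.length).findIdx (fun x => τ.getD (2*x+1) 0 == 1) = j := by
          rw [List.findIdx_eq hjτ]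
          constructor
          · simp only [List.getElem_range]
            rw [prefix_getD hpre h2j, hpσ]
            decide
          · intro i hi
            simp only [List.getElem_range]
            have h2i : 2*i+1 < σ.length := lt_of_le_of_lt (by omega) h2j
            rw [prefix_getD hpre h2i]
            have := hspec.2 i hi
            simpa using this
        rw [hfindτ, if_pos (lt_of_lt_of_le hjl hlen),
          prefix_getD hpre (show 2*j < σ.length by omega)]
        exact h
      · rw [if_neg hjl] at h; simp at h
    · rw [if_neg hn] at h ⊢; exact h
  comp := by
    apply Primrec₂.to_comp
    have hp : Primrec₂ fun (σ : List ℕ) (x : ℕ) => (σ.getD (2*x+1) 0 == 1) :=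
      Primrec.beq.comp
        ((Primrec.list_getD 0).comp Primrec.fst
          (Primrec.succ.comp (Primrec.nat_mul.comp (Primrec.const 2) Primrec.snd)))
        (Primrec.const 1)
    have hfind : Primrec fun σ : List ℕ =>
        (List.range σ.length).findIdx (fun x => σ.getD (2*x+1) 0 == 1) :=
      Primrec.list_findIdx (Primrec.list_range.comp Primrec.list_length) hp
    have hg : Primrec fun σ : List ℕ =>
        (if (List.range σ.length).findIdx (fun x => σ.getD (2*x+1) 0 == 1) < σ.length then
          some (σ.getD (2 * (List.range σ.length).findIdx (fun x => σ.getD (2*x+1) 0 == 1)) 0)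
        else none) :=
      Primrec.ite (Primrec.nat_lt.comp hfind Primrec.list_length)
        (Primrec.option_some.comp
          ((Primrec.list_getD 0).comp Primrec.id
            (Primrec.nat_mul.comp (Primrec.const 2) hfind)))
        (Primrec.const none)
    exact Primrec.ite (Primrec.eq.comp Primrec.snd (Primrec.const 0))
      (hg.comp Primrec.fst) (Primrec.const (some 0))

end AuxRT1BWT

theorem RT1_wequiv_BWT (k : ℕ) (hk : 1 ≤ k) : WEquiv (RT1 k) (BWT k) := by
  constructor
  · -- RT1 ≤ BWT
    refine ⟨PhiId, Psi1, ?_⟩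
    intro c hc
    refine ⟨c, PhiId_total c, hc, ?_⟩
    rintro g ⟨i, hik, hinf, rfl⟩
    refine ⟨fun x => if c x = i then 1 else 0, ?_, ?_, ?_, ⟨i, ?_⟩⟩
    · intro x
      refine ⟨2*x+2, ?_⟩
      show psi1eval _ _ = _
      unfold psi1eval
      rw [if_pos ⟨by rw [initSeg_length]; omega, by rw [initSeg_length]; omega⟩,
        initSeg_getD _ (show 2*x < 2*x+2 by omega),
        initSeg_getD _ (show 1 < 2*x+2 by omega)]
      rw [join_even]
      have h1 : join c (natSeq i) 1 = i := by
        have := join_odd c (natSeq i) 0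
        simpa [natSeq] using this
      rw [h1]
    · intro x; dsimp only; split <;> omega
    · have : {x | (if c x = i then 1 else 0) = 1} = {x | c x = i} := by
        ext x; by_cases h : c x = i <;> simp [h]
      rw [this]; exact hinf
    · intro x hx
      by_contra h
      dsimp only at hx
      rw [if_neg h] at hx
      exact absurd hx (by norm_num)
  · -- BWT ≤ RT1
    refine ⟨PhiId, Psi2, ?_⟩
    intro c hc
    refine ⟨c, PhiId_total c, hc, ?_⟩
    rintro g ⟨hg1, hginf, i, hgi⟩
    have hex : ∃ x, g x = 1 := by
      obtain ⟨x, hx⟩ := hginf.nonempty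
      exact ⟨x, hx⟩
    set x₀ := Nat.find hex with hx₀def
    have hx₀ : g x₀ = 1 := Nat.find_spec hex
    have hmin : ∀ y, y < x₀ → g y ≠ 1 := fun y hy => Nat.find_min hex hy
    refine ⟨natSeq (c x₀), ?_, ⟨c x₀, hc x₀, ?_, rfl⟩⟩
    · intro n
      by_cases hn : n = 0
      · subst hn
        refine ⟨2*x₀+2, ?_⟩
        show psi2eval (initSeg (join c g) (2*x₀+2)) 0 = some (natSeq (c x₀) 0)
        unfold psi2eval
        rw [if_pos rfl]
        set σ := initSeg (join c g) (2*x₀+2) with hσ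
        have hσlen : σ.length = 2*x₀+2 := initSeg_length _ _
        have hfi : (List.range σ.length).findIdx (fun x => σ.getD (2*x+1) 0 == 1) = x₀ := by
          have hlen : x₀ < (List.range σ.length).length := by
            simp only [List.length_range, hσlen]; omega
          rw [List.findIdx_eq hlen]
          constructor
          · simp only [List.getElem_range]
            rw [hσ, initSeg_getD _ (show 2*x₀+1 < 2*x₀+2 by omega), join_odd]
            simp [hx₀]
          · intro j hj
            simp only [List.getElem_range]
            rw [hσ, initSeg_getD _ (show 2*j+1 < 2*x₀+2 by omega), join_odd]
            simp [hmin j hj]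
        rw [hfi, if_pos (by rw [hσlen]; omega),
          hσ, initSeg_getD _ (show 2*x₀ < 2*x₀+2 by omega), join_even]
        simp [natSeq]
      · refine ⟨0, ?_⟩
        show psi2eval (initSeg (join c g) 0) n = some (natSeq (c x₀) n)
        unfold psi2eval
        rw [if_neg hn]
        simp [natSeq, hn]
    · refine hginf.mono ?_
      intro x hx
      show c x = c x₀
      rw [hgi x hx, hgi x₀ hx₀]
end

section
/- The first-order part of the thin set problem TS¹₃ is uniformly computably true. -/
open Classical

/-- The thin set problem `TS¹₃`: instances are colorings `c : ℕ → 3`; solutions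
are (characteristic functions of) infinite sets on which `c` takes at most two values. -/
def TS13 : Problem where
  dom := { c | ∀ x, c x < 3 }
  sol c := { h | (∀ x, h x ≤ 1) ∧ {x | h x = 1}.Infinite ∧
    ∃ a b, ∀ x, h x = 1 → c x = a ∨ c x = b }


/- ### Auxiliary development ### -/

namespace TS

def rd (τ : List ℕ) (i : ℕ) : ℕ := τ.getD i 0
def cS (n : ℕ) : ℕ := n.unpair.2.unpair.1
def cK (n : ℕ) : ℕ := n.unpair.2.unpair.2.unpair.1
def cY (n : ℕ) : ℕ := n.unpair.2.unpair.2.unpair.2.unpair.1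
def cA (n : ℕ) : ℕ := n.unpair.2.unpair.2.unpair.2.unpair.2
def sg (n : ℕ) : List ℕ := Denumerable.ofNat (List ℕ) (cS n)
def flist (τ : List ℕ) (k : ℕ) : List ℕ := (List.range k).map (fun t => rd τ (2 * t))
def rho (τ σ : List ℕ) : List ℕ :=
  (List.range (2 * σ.length)).map (fun t => if t % 2 = 0 then rd τ t else σ.getD (t / 2) 0)

def valid (τ : List ℕ) (n : ℕ) : Bool :=
  decide (2 * cK n < n) &&
  decide (4 * (sg n).length < n) &&
  ((sg n).foldr (fun v r => decide (v ≤ 1) && r) true) &&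
  ((List.range (sg n).length).foldr (fun i r =>
      ((!decide ((sg n).getD i 0 = 1)) ||
        (decide (4 * Nat.pair (Encodable.encode (flist τ (cK n))) i + 1 < n) &&
         decide (rd τ (4 * Nat.pair (Encodable.encode (flist τ (cK n))) i + 1) = cA n + 1))) && r) true) &&
  decide (4 * Nat.pair (Encodable.encode (rho τ (sg n))) 0 + 3 < n) &&
  decide (rd τ (4 * Nat.pair (Encodable.encode (rho τ (sg n))) 0 + 3) = cY n + 1)

def searchEval (τ : List ℕ) (x : ℕ) : Option ℕ :=
  if x = 0 then
    (List.range τ.length).foldr (fun n acc => if valid τ n then some (cY n) else acc) none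
  else some 0

theorem rd_prim : Primrec₂ rd := Primrec.list_getD 0
theorem cS_prim : Primrec cS :=
  Primrec.fst.comp (Primrec.unpair.comp (Primrec.snd.comp Primrec.unpair))
theorem cK_prim : Primrec cK :=
  Primrec.fst.comp <| Primrec.unpair.comp <| Primrec.snd.comp <| Primrec.unpair.comp
    (Primrec.snd.comp Primrec.unpair)
theorem cY_prim : Primrec cY :=
  Primrec.fst.comp <| Primrec.unpair.comp <| Primrec.snd.comp <| Primrec.unpair.comp <|
    Primrec.snd.comp <| Primrec.unpair.comp (Primrec.snd.comp Primrec.unpair)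
theorem cA_prim : Primrec cA :=
  Primrec.snd.comp <| Primrec.unpair.comp <| Primrec.snd.comp <| Primrec.unpair.comp <|
    Primrec.snd.comp <| Primrec.unpair.comp (Primrec.snd.comp Primrec.unpair)
theorem sg_prim : Primrec sg := (Primrec.ofNat (List ℕ)).comp cS_prim

theorem flist_prim : Primrec₂ flist :=
  (Primrec.list_map (Primrec.list_range.comp Primrec.snd)
    ((rd_prim.comp (Primrec.fst.comp Primrec.fst)
      (Primrec.nat_mul.comp (Primrec.const 2) Primrec.snd)).to₂)).to₂

theorem rho_prim : Primrec₂ rho :=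
  (Primrec.list_map
    (Primrec.list_range.comp (Primrec.nat_mul.comp (Primrec.const 2)
      (Primrec.list_length.comp Primrec.snd)))
    ((Primrec.ite (Primrec.eq.comp (Primrec.nat_mod.comp Primrec.snd (Primrec.const 2))
        (Primrec.const 0))
      (rd_prim.comp (Primrec.fst.comp Primrec.fst) Primrec.snd)
      ((Primrec.list_getD 0).comp (Primrec.snd.comp Primrec.fst)
        (Primrec.nat_div.comp Primrec.snd (Primrec.const 2)))).to₂)).to₂

end TS

namespace TS
open Primrec

theorem valid_prim : Primrec₂ valid := by
  have hτ : Primrec fun p : List ℕ × ℕ => p.1 := Primrec.fst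
  have hn : Primrec fun p : List ℕ × ℕ => p.2 := Primrec.snd
  have hsg : Primrec fun p : List ℕ × ℕ => sg p.2 := sg_prim.comp hn
  have hfl : Primrec fun p : List ℕ × ℕ => flist p.1 (cK p.2) :=
    flist_prim.comp hτ (cK_prim.comp hn)
  have hrho : Primrec fun p : List ℕ × ℕ => rho p.1 (sg p.2) := rho_prim.comp hτ hsg
  have c1 : Primrec fun p : List ℕ × ℕ => decide (2 * cK p.2 < p.2) :=
    (nat_lt.comp (nat_mul.comp (const 2) (cK_prim.comp hn)) hn).decide
  have c2 : Primrec fun p : List ℕ × ℕ => decide (4 * (sg p.2).length < p.2) :=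
    (nat_lt.comp (nat_mul.comp (const 4) (list_length.comp hsg)) hn).decide
  have c3 : Primrec fun p : List ℕ × ℕ =>
      (sg p.2).foldr (fun v r => decide (v ≤ 1) && r) true := by
    have := list_foldr (α := List ℕ × ℕ) (β := ℕ) (σ := Bool) hsg (const true)
      ((Primrec.and.comp (nat_le.comp (Primrec.fst.comp Primrec.snd) (const 1)).decide
        (Primrec.snd.comp Primrec.snd)).to₂ : Primrec₂ fun (_ : List ℕ × ℕ) (q : ℕ × Bool) =>
          decide (q.1 ≤ 1) && q.2)
    exact this
  have c4 : Primrec fun p : List ℕ × ℕ =>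
      (List.range (sg p.2).length).foldr (fun i r =>
        ((!decide ((sg p.2).getD i 0 = 1)) ||
          (decide (4 * Nat.pair (Encodable.encode (flist p.1 (cK p.2))) i + 1 < p.2) &&
           decide (rd p.1 (4 * Nat.pair (Encodable.encode (flist p.1 (cK p.2))) i + 1)
             = cA p.2 + 1))) && r) true := by
    have hi : Primrec fun z : (List ℕ × ℕ) × ℕ × Bool => z.2.1 :=
      Primrec.fst.comp Primrec.snd
    have hacc : Primrec fun z : (List ℕ × ℕ) × ℕ × Bool => z.2.2 :=
      Primrec.snd.comp Primrec.snd
    have hτ' : Primrec fun z : (List ℕ × ℕ) × ℕ × Bool => z.1.1 :=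
      Primrec.fst.comp Primrec.fst
    have hn' : Primrec fun z : (List ℕ × ℕ) × ℕ × Bool => z.1.2 :=
      Primrec.snd.comp Primrec.fst
    have e1 : Primrec fun z : (List ℕ × ℕ) × ℕ × Bool =>
        decide ((sg z.1.2).getD z.2.1 0 = 1) :=
      (Primrec.eq.comp ((list_getD 0).comp (sg_prim.comp hn') hi) (const 1)).decide
    have hidx : Primrec fun z : (List ℕ × ℕ) × ℕ × Bool =>
        4 * Nat.pair (Encodable.encode (flist z.1.1 (cK z.1.2))) z.2.1 + 1 :=
      nat_add.comp (nat_mul.comp (const 4)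
        (Primrec₂.natPair.comp
          (Primrec.encode.comp (flist_prim.comp hτ' (cK_prim.comp hn'))) hi)) (const 1)
    have e2 : Primrec fun z : (List ℕ × ℕ) × ℕ × Bool =>
        decide (4 * Nat.pair (Encodable.encode (flist z.1.1 (cK z.1.2))) z.2.1 + 1 < z.1.2) :=
      (nat_lt.comp hidx hn').decide
    have e3 : Primrec fun z : (List ℕ × ℕ) × ℕ × Bool =>
        decide (rd z.1.1 (4 * Nat.pair (Encodable.encode (flist z.1.1 (cK z.1.2))) z.2.1 + 1)
          = cA z.1.2 + 1) :=
      (Primrec.eq.comp (rd_prim.comp hτ' hidx) (nat_add.comp (cA_prim.comp hn') (const 1))).decide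
    have hh : Primrec₂ fun (p : List ℕ × ℕ) (q : ℕ × Bool) =>
        ((!decide ((sg p.2).getD q.1 0 = 1)) ||
          (decide (4 * Nat.pair (Encodable.encode (flist p.1 (cK p.2))) q.1 + 1 < p.2) &&
           decide (rd p.1 (4 * Nat.pair (Encodable.encode (flist p.1 (cK p.2))) q.1 + 1)
             = cA p.2 + 1))) && q.2 :=
      (Primrec.and.comp (Primrec.or.comp (Primrec.not.comp e1) (Primrec.and.comp e2 e3)) hacc).to₂
    exact list_foldr (list_range.comp (list_length.comp hsg)) (const true) hh
  have hidx2 : Primrec fun p : List ℕ × ℕ =>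
      4 * Nat.pair (Encodable.encode (rho p.1 (sg p.2))) 0 + 3 :=
    nat_add.comp (nat_mul.comp (const 4)
      (Primrec₂.natPair.comp (Primrec.encode.comp hrho) (const 0))) (const 3)
  have c5 : Primrec fun p : List ℕ × ℕ =>
      decide (4 * Nat.pair (Encodable.encode (rho p.1 (sg p.2))) 0 + 3 < p.2) :=
    (nat_lt.comp hidx2 hn).decide
  have c6 : Primrec fun p : List ℕ × ℕ =>
      decide (rd p.1 (4 * Nat.pair (Encodable.encode (rho p.1 (sg p.2))) 0 + 3) = cY p.2 + 1) :=
    (Primrec.eq.comp (rd_prim.comp hτ hidx2) (nat_add.comp (cY_prim.comp hn) (const 1))).decide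
  exact Primrec.and.comp (Primrec.and.comp (Primrec.and.comp (Primrec.and.comp
    (Primrec.and.comp c1 c2) c3) c4) c5) c6

theorem searchEval_comp : Computable₂ searchEval := by
  have hfold : Primrec fun p : List ℕ × ℕ =>
      (List.range p.1.length).foldr
        (fun n acc => if valid p.1 n then some (cY n) else acc) none := by
    have hh : Primrec₂ fun (p : List ℕ × ℕ) (q : ℕ × Option ℕ) =>
        if valid p.1 q.1 then some (cY q.1) else q.2 :=
      (Primrec.ite
        (Primrec.eq.comp (valid_prim.comp (Primrec.fst.comp Primrec.fst)
          (Primrec.fst.comp Primrec.snd)) (const true))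
        (option_some.comp (cY_prim.comp (Primrec.fst.comp Primrec.snd)))
        (Primrec.snd.comp Primrec.snd)).to₂
    exact (list_foldr (list_range.comp (list_length.comp Primrec.fst)) (const none) hh).of_eq
      (fun p => by simp)
  have : Primrec₂ searchEval := by
    refine (Primrec.ite (Primrec.eq.comp Primrec.snd (const 0)) hfold (const (some 0))).to₂.of_eq ?_
    intro τ x
    simp [searchEval]
  exact this.to_comp
end TS

namespace TS

theorem foldr_and_congr {l : List ℕ} {f g : ℕ → Bool} (h : ∀ a ∈ l, f a = g a) (b : Bool) :
    l.foldr (fun a r => f a && r) b = l.foldr (fun a r => g a && r) b := by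
  induction l with
  | nil => rfl
  | cons a l ih =>
    simp only [List.foldr_cons, h a List.mem_cons_self,
      ih (fun x hx => h x (List.mem_cons_of_mem _ hx))]

theorem valid_append (τ δ : List ℕ) (n : ℕ) (hn : n ≤ τ.length) :
    valid (τ ++ δ) n = valid τ n := by
  have hrd : ∀ i, i < n → rd (τ ++ δ) i = rd τ i := fun i hi =>
    List.getD_append _ _ _ _ (lt_of_lt_of_le hi hn)
  by_cases h1 : 2 * cK n < n
  swap
  · simp [valid, h1]
  by_cases h2 : 4 * (sg n).length < n
  swap
  · simp [valid, h2]
  have hfl : flist (τ ++ δ) (cK n) = flist τ (cK n) := by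
    unfold flist
    refine List.map_congr_left fun t ht => ?_
    exact hrd _ (by have := List.mem_range.1 ht; omega)
  have hrho : rho (τ ++ δ) (sg n) = rho τ (sg n) := by
    unfold rho
    refine List.map_congr_left fun t ht => ?_
    have ht' := List.mem_range.1 ht
    by_cases hpar : t % 2 = 0 <;> simp only [hpar, if_true, if_false, reduceIte]
    · exact hrd _ (by omega)
  unfold valid
  rw [hfl, hrho]
  have hD : ((List.range (sg n).length).foldr (fun i r =>
      ((!decide ((sg n).getD i 0 = 1)) ||
        (decide (4 * Nat.pair (Encodable.encode (flist τ (cK n))) i + 1 < n) &&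
         decide (rd (τ ++ δ) (4 * Nat.pair (Encodable.encode (flist τ (cK n))) i + 1)
           = cA n + 1))) && r) true) =
      ((List.range (sg n).length).foldr (fun i r =>
      ((!decide ((sg n).getD i 0 = 1)) ||
        (decide (4 * Nat.pair (Encodable.encode (flist τ (cK n))) i + 1 < n) &&
         decide (rd τ (4 * Nat.pair (Encodable.encode (flist τ (cK n))) i + 1)
           = cA n + 1))) && r) true) := by
    refine foldr_and_congr (fun i _ => ?_) true
    by_cases hi : 4 * Nat.pair (Encodable.encode (flist τ (cK n))) i + 1 < n
    · rw [hrd _ hi]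
    · simp [hi]
  rw [hD]
  by_cases hE : 4 * Nat.pair (Encodable.encode (rho τ (sg n))) 0 + 3 < n
  · rw [hrd _ hE]
  · simp [hE]

theorem foldr_agree (τ τ' : List ℕ) (A : List ℕ) (i : Option ℕ) (y : ℕ)
    (hag : ∀ n ∈ A, valid τ n = valid τ' n)
    (h : A.foldr (fun n acc => if valid τ n then some (cY n) else acc) none = some y) :
    A.foldr (fun n acc => if valid τ' n then some (cY n) else acc) i = some y := by
  induction A generalizing i with
  | nil => simp at h
  | cons a A ih =>
    simp only [List.foldr_cons] at h ⊢
    rw [← hag a List.mem_cons_self]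
    by_cases hv : valid τ a
    · simpa [hv] using h
    · simp only [hv] at h ⊢
      simp only [Bool.false_eq_true, if_false] at h ⊢
      exact ih i (fun n hn => hag n (List.mem_cons_of_mem _ hn)) h

theorem searchEval_mono : ∀ σ τ x y, σ <+: τ → searchEval σ x = some y →
    searchEval τ x = some y := by
  intro σ τ x y hpre h
  by_cases hx : x = 0
  swap
  · simp only [searchEval, if_neg hx] at h ⊢
    exact h
  subst hx
  obtain ⟨δ, rfl⟩ := hpre
  simp only [searchEval, if_pos rfl] at h ⊢
  have hsplit : List.range (σ ++ δ).length =
      List.range σ.length ++ (List.range (σ ++ δ).length).drop σ.length := by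
    conv_lhs => rw [← List.take_append_drop σ.length (List.range (σ ++ δ).length)]
    rw [List.take_range]
    congr 2
    simp [List.length_append]
  rw [hsplit, List.foldr_append]
  exact foldr_agree σ (σ ++ δ) _ _ y
    (fun n hn => (valid_append σ δ n (le_of_lt (List.mem_range.1 hn))).symm) h

end TS


namespace TS

theorem foldr_and_iff (l : List ℕ) (p : ℕ → Bool) :
    l.foldr (fun a r => p a && r) true = true ↔ ∀ a ∈ l, p a = true := by
  induction l with
  | nil => simp
  | cons a l ih => simp [ih]

theorem search_sound {τ : List ℕ} {A : List ℕ} {y : ℕ}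
    (h : A.foldr (fun n acc => if valid τ n then some (cY n) else acc) none = some y) :
    ∃ n ∈ A, valid τ n = true ∧ y = cY n := by
  induction A with
  | nil => simp at h
  | cons a A ih =>
    simp only [List.foldr_cons] at h
    by_cases hv : valid τ a
    · rw [if_pos hv] at h
      exact ⟨a, List.mem_cons_self, hv, (Option.some.inj h).symm⟩
    · rw [if_neg hv] at h
      obtain ⟨n, hn, h1, h2⟩ := ih h
      exact ⟨n, List.mem_cons_of_mem _ hn, h1, h2⟩

theorem search_exists {τ : List ℕ} {A : List ℕ} (h : ∃ n ∈ A, valid τ n = true) :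
    ∃ y, A.foldr (fun n acc => if valid τ n then some (cY n) else acc) none = some y := by
  induction A with
  | nil => simp at h
  | cons a A ih =>
    by_cases hv : valid τ a
    · exact ⟨cY a, by simp [hv]⟩
    · obtain ⟨n, hn, hval⟩ := h
      rcases List.mem_cons.1 hn with rfl | hn'
      · exact absurd hval hv
      · obtain ⟨y, hy⟩ := ih ⟨n, hn', hval⟩
        exact ⟨y, by simpa [hv] using hy⟩

theorem pair_le_right (a : ℕ) {b b' : ℕ} (h : b ≤ b') : Nat.pair a b ≤ Nat.pair a b' := by
  rcases eq_or_lt_of_le h with rfl | h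
  · exact le_rfl
  · exact le_of_lt (Nat.pair_lt_pair_right a h)

theorem initSeg_length (f : ℕ → ℕ) (m : ℕ) : (initSeg f m).length = m := by simp [initSeg]

theorem initSeg_getD {f : ℕ → ℕ} {m i : ℕ} (h : i < m) : rd (initSeg f m) i = f i := by
  have hl : i < (initSeg f m).length := by simp [initSeg, h]
  rw [rd, List.getD_eq_getElem _ _ hl]
  simp [initSeg]

theorem initSeg_prefix (f : ℕ → ℕ) {a b : ℕ} (h : a ≤ b) : initSeg f a <+: initSeg f b := by
  have heq : initSeg f a = (initSeg f b).take a := by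
    rw [initSeg, initSeg, ← List.map_take, List.take_range]
    congr 2
    omega
  rw [heq]
  exact List.take_prefix _ _

theorem initSeg_eq {g : ℕ → ℕ} {σ : List ℕ} {L : ℕ} (h : σ.length = L)
    (hv : ∀ i < L, g i = σ.getD i 0) : initSeg g L = σ := by
  refine List.ext_getElem (by simp [initSeg, h]) fun i h1 h2 => ?_
  have hiL : i < L := by simpa [initSeg] using h1
  simp only [initSeg, List.getElem_map, List.getElem_range]
  rw [hv i hiL, List.getD_eq_getElem _ _ h2]

theorem conv_unique {Φ : Functional} {f : ℕ → ℕ} {x y y' : ℕ}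
    (h : Φ.conv f x y) (h' : Φ.conv f x y') : y = y' := by
  obtain ⟨k, hk⟩ := h
  obtain ⟨k', hk'⟩ := h'
  rcases le_total k k' with hle | hle
  · have := Φ.mono _ _ _ _ (initSeg_prefix f hle) hk
    exact Option.some.inj (this.symm.trans hk')
  · have := Φ.mono _ _ _ _ (initSeg_prefix f hle) hk'
    exact (Option.some.inj (this.symm.trans hk)).symm

theorem total_seg (Φ : Functional) {f g : ℕ → ℕ} (h : Φ.Total f g) (L : ℕ) :
    ∃ k, ∀ i < L, Φ.eval (initSeg f k) i = some (g i) := by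
  induction L with
  | zero => exact ⟨0, by omega⟩
  | succ L ih =>
    obtain ⟨k, hk⟩ := ih
    obtain ⟨k', hk'⟩ := h L
    refine ⟨max k k', fun i hi => ?_⟩
    rcases Nat.lt_or_ge i L with hi' | hi'
    · exact Φ.mono _ _ _ _ (initSeg_prefix f (le_max_left _ _)) (hk i hi')
    · have hiL : i = L := by omega
      subst hiL
      exact Φ.mono _ _ _ _ (initSeg_prefix f (le_max_right _ _)) hk'

theorem graph_eval (Φ : Functional) (σ : List ℕ) (x : ℕ) :
    Φ.graph (Nat.pair (Encodable.encode σ) x) = Encodable.encode (Φ.eval σ x) := by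
  simp [Functional.graph, Nat.unpair_pair]

theorem eval_of_graph {Φ : Functional} {σ : List ℕ} {x y : ℕ}
    (h : Φ.graph (Nat.pair (Encodable.encode σ) x) = y + 1) : Φ.eval σ x = some y := by
  rw [graph_eval] at h
  cases he : Φ.eval σ x with
  | none => rw [he] at h; simp [Encodable.encode_none] at h
  | some z =>
    rw [he] at h
    simp only [Encodable.encode_some, Encodable.encode_nat] at h
    exact congrArg some (by omega)

theorem join_even (f g : ℕ → ℕ) (t : ℕ) : join f g (2 * t) = f t := by
  unfold join
  rw [if_pos (by omega)]
  congr 1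
  omega

theorem join_odd (f g : ℕ → ℕ) (t : ℕ) : join f g (2 * t + 1) = g t := by
  unfold join
  rw [if_neg (by omega)]
  congr 1
  omega

theorem exists_infinite_color {p : ℕ → ℕ} (hp : ∀ x, p x < 3) :
    ∃ a, {x | p x = a}.Infinite := by
  by_contra hcon
  push_neg at hcon
  have hsub : (Set.univ : Set ℕ) ⊆ {x | p x = 0} ∪ {x | p x = 1} ∪ {x | p x = 2} := by
    intro x _
    have := hp x
    simp only [Set.mem_union, Set.mem_setOf_eq]
    omega
  exact Set.infinite_univ (Set.Finite.subset (((hcon 0).union (hcon 1)).union (hcon 2)) hsub)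

theorem rd_join_f {f G H : ℕ → ℕ} {m t : ℕ} (ht : 2 * t < m) :
    rd (initSeg (join f (join G H)) m) (2 * t) = f t := by
  rw [initSeg_getD ht, join_even]

theorem rd_join_G {f G H : ℕ → ℕ} {m q : ℕ} (hq : 4 * q + 1 < m) :
    rd (initSeg (join f (join G H)) m) (4 * q + 1) = G q := by
  have h1 : (4 : ℕ) * q + 1 = 2 * (2 * q) + 1 := by omega
  rw [h1] at hq ⊢
  rw [initSeg_getD hq, join_odd, join_even]

theorem rd_join_H {f G H : ℕ → ℕ} {m q : ℕ} (hq : 4 * q + 3 < m) :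
    rd (initSeg (join f (join G H)) m) (4 * q + 3) = H q := by
  have h1 : (4 : ℕ) * q + 3 = 2 * (2 * q + 1) + 1 := by omega
  rw [h1] at hq ⊢
  rw [initSeg_getD hq, join_odd, join_odd]

theorem flist_join {f G H : ℕ → ℕ} {m k : ℕ} (hk : 2 * k ≤ m) :
    flist (initSeg (join f (join G H)) m) k = initSeg f k := by
  unfold flist initSeg
  refine List.map_congr_left fun t ht => ?_
  have := List.mem_range.1 ht
  exact rd_join_f (by omega)

theorem rho_join {f G H g : ℕ → ℕ} {m : ℕ} {σ : List ℕ} (hσ : initSeg g σ.length = σ)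
    (hm : 2 * σ.length ≤ m) :
    rho (initSeg (join f (join G H)) m) σ = initSeg (join f g) (2 * σ.length) := by
  show (List.range (2 * σ.length)).map
      (fun t => if t % 2 = 0 then rd (initSeg (join f (join G H)) m) t else σ.getD (t / 2) 0)
    = (List.range (2 * σ.length)).map (join f g)
  refine List.map_congr_left fun t ht => ?_
  have ht' := List.mem_range.1 ht
  by_cases hpar : t % 2 = 0
  · obtain ⟨u, rfl⟩ : ∃ u, t = 2 * u := ⟨t / 2, by omega⟩
    rw [if_pos hpar, rd_join_f (by omega), join_even]
  · obtain ⟨u, rfl⟩ : ∃ u, t = 2 * u + 1 := ⟨t / 2, by omega⟩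
    rw [if_neg hpar, join_odd]
    have hd : (2 * u + 1) / 2 = u := by omega
    rw [hd]
    have hlt : u < σ.length := by omega
    calc σ.getD u 0 = (initSeg g σ.length).getD u 0 := by rw [hσ]
    _ = g u := initSeg_getD hlt

end TS


namespace TS

def gExt (σ : List ℕ) (p : ℕ → ℕ) (a' : ℕ) : ℕ → ℕ :=
  fun t => if t < σ.length then σ.getD t 0 else if p t = a' then 1 else 0

theorem gExt_seg (σ : List ℕ) (p : ℕ → ℕ) (a' : ℕ) :
    initSeg (gExt σ p a') σ.length = σ :=
  initSeg_eq rfl (fun i hi => by simp [gExt, hi])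

theorem gExt_sol {σ : List ℕ} {p : ℕ → ℕ} {a a' : ℕ}
    (hbin : ∀ i < σ.length, σ.getD i 0 ≤ 1)
    (hcol : ∀ i < σ.length, σ.getD i 0 = 1 → p i = a)
    (ha' : {x | p x = a'}.Infinite) : gExt σ p a' ∈ TS13.sol p := by
  refine ⟨fun x => ?_, ?_, a, a', fun x hx => ?_⟩
  · by_cases hx : x < σ.length
    · simpa [gExt, hx] using hbin x hx
    · by_cases hpx : p x = a' <;> simp [gExt, hx, hpx]
  · refine ((ha'.diff (Set.finite_lt_nat σ.length)).mono ?_)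
    intro x hx
    obtain ⟨h1, h2⟩ := hx
    have hxL : ¬ x < σ.length := h2
    simp only [Set.mem_setOf_eq] at h1 ⊢
    simp [gExt, hxL, h1]
  · by_cases hxL : x < σ.length
    · exact Or.inl (hcol x hxL (by simpa [gExt, hxL] using hx))
    · by_cases hpx : p x = a'
      · exact Or.inr hpx
      · exfalso; simp [gExt, hxL, hpx] at hx

end TS

theorem FOPart_TS13_unifCompTrue : UnifCompTrue (FOPart TS13) := by
  refine ⟨⟨TS.searchEval, TS.searchEval_mono, TS.searchEval_comp⟩, ?_⟩
  rintro h ⟨f, Φ₀, Ψ₀, rfl, p, hΦtot, hpdom, hΨ⟩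
  have hp3 : ∀ x, p x < 3 := hpdom
  obtain ⟨a', ha'⟩ := TS.exists_infinite_color hp3
  -- Soundness: every valid certificate found in a prefix yields a genuine solution value.
  have sound : ∀ m n, n < m →
      TS.valid (initSeg (join f (join Φ₀.graph Ψ₀.graph)) m) n = true →
      natSeq (TS.cY n) ∈ (FOPart TS13).sol (join f (join Φ₀.graph Ψ₀.graph)) := by
    intro m n hnm hval
    unfold TS.valid at hval
    simp only [Bool.and_eq_true] at hval
    obtain ⟨⟨⟨⟨⟨h1d, h2d⟩, h3⟩, h4⟩, h5d⟩, h6d⟩ := hval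
    have h1 : 2 * TS.cK n < n := of_decide_eq_true h1d
    have h2 : 4 * (TS.sg n).length < n := of_decide_eq_true h2d
    have h5 : 4 * Nat.pair (Encodable.encode
        (TS.rho (initSeg (join f (join Φ₀.graph Ψ₀.graph)) m) (TS.sg n))) 0 + 3 < n :=
      of_decide_eq_true h5d
    have h6 : TS.rd (initSeg (join f (join Φ₀.graph Ψ₀.graph)) m)
        (4 * Nat.pair (Encodable.encode
          (TS.rho (initSeg (join f (join Φ₀.graph Ψ₀.graph)) m) (TS.sg n))) 0 + 3)
        = TS.cY n + 1 := of_decide_eq_true h6d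
    have hflist : TS.flist (initSeg (join f (join Φ₀.graph Ψ₀.graph)) m) (TS.cK n)
        = initSeg f (TS.cK n) := TS.flist_join (by omega)
    rw [hflist] at h4
    have hbin : ∀ i < (TS.sg n).length, (TS.sg n).getD i 0 ≤ 1 := by
      intro i hi
      have hmem : (TS.sg n).getD i 0 ∈ TS.sg n := by
        rw [List.getD_eq_getElem _ _ hi]; exact List.getElem_mem _
      exact of_decide_eq_true ((TS.foldr_and_iff _ _).1 h3 _ hmem)
    have hcolor : ∀ i < (TS.sg n).length, (TS.sg n).getD i 0 = 1 → p i = TS.cA n := by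
      intro i hi hσi
      have h4' := (TS.foldr_and_iff _ _).1 h4 i (List.mem_range.2 hi)
      rw [Bool.or_eq_true] at h4'
      rcases h4' with hL | hR
      · exfalso
        have : decide ((TS.sg n).getD i 0 = 1) = false := by simpa using hL
        exact absurd hσi (of_decide_eq_false this)
      · rw [Bool.and_eq_true] at hR
        have hc1 := of_decide_eq_true hR.1
        have hc2 := of_decide_eq_true hR.2
        rw [TS.rd_join_G (by omega)] at hc2
        exact TS.conv_unique (hΦtot i) ⟨TS.cK n, TS.eval_of_graph hc2⟩
    have hgseg : initSeg (TS.gExt (TS.sg n) p a') (TS.sg n).length = TS.sg n :=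
      TS.gExt_seg _ _ _
    have hgsol : TS.gExt (TS.sg n) p a' ∈ TS13.sol p := TS.gExt_sol hbin hcolor ha'
    have hrho : TS.rho (initSeg (join f (join Φ₀.graph Ψ₀.graph)) m) (TS.sg n)
        = initSeg (join f (TS.gExt (TS.sg n) p a')) (2 * (TS.sg n).length) :=
      TS.rho_join hgseg (by omega)
    rw [hrho] at h5 h6
    rw [TS.rd_join_H (by omega)] at h6
    exact ⟨f, Φ₀, Ψ₀, p, TS.gExt (TS.sg n) p a', TS.cY n, rfl, hΦtot, hpdom, hgsol,
      ⟨2 * (TS.sg n).length, TS.eval_of_graph h6⟩, rfl⟩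
  -- Existence: build a certificate from an actual monochromatic solution.
  have hg₀val : ∀ t, TS.gExt [] p a' t = if p t = a' then 1 else 0 := fun t => by
    simp [TS.gExt]
  have hg₀sol : TS.gExt [] p a' ∈ TS13.sol p :=
    TS.gExt_sol (a := a') (fun i hi => by simp at hi) (fun i hi => by simp at hi) ha'
  obtain ⟨y, hyconv⟩ := hΨ _ hg₀sol
  obtain ⟨k₀, hk₀⟩ := hyconv
  have hψeval : Ψ₀.eval (initSeg (join f (TS.gExt [] p a')) (2 * k₀)) 0 = some y :=
    Ψ₀.mono _ _ _ _ (TS.initSeg_prefix _ (by omega)) hk₀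
  obtain ⟨kc, hkc⟩ := TS.total_seg Φ₀ hΦtot k₀
  obtain ⟨n, hcS, hcK, hcY, hcA, hb⟩ : ∃ n,
      TS.cS n = Encodable.encode (initSeg (TS.gExt [] p a') k₀) ∧ TS.cK n = kc ∧
      TS.cY n = y ∧ TS.cA n = a' ∧
      4 * Nat.pair (Encodable.encode (initSeg f kc)) k₀ +
        4 * Nat.pair (Encodable.encode (initSeg (join f (TS.gExt [] p a')) (2 * k₀))) 0 +
        2 * kc + 4 * k₀ + 5 ≤ n := by
    refine ⟨Nat.pair
      (4 * Nat.pair (Encodable.encode (initSeg f kc)) k₀ +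
        4 * Nat.pair (Encodable.encode (initSeg (join f (TS.gExt [] p a')) (2 * k₀))) 0 +
        2 * kc + 4 * k₀ + 5)
      (Nat.pair (Encodable.encode (initSeg (TS.gExt [] p a') k₀))
        (Nat.pair kc (Nat.pair y a'))), ?_, ?_, ?_, ?_, ?_⟩
    · simp [TS.cS, Nat.unpair_pair]
    · simp [TS.cK, Nat.unpair_pair]
    · simp [TS.cY, Nat.unpair_pair]
    · simp [TS.cA, Nat.unpair_pair]
    · exact Nat.left_le_pair _ _
  have hsgeq : TS.sg n = initSeg (TS.gExt [] p a') k₀ := by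
    rw [TS.sg, hcS, Denumerable.ofNat_encode]
  have hlen : (TS.sg n).length = k₀ := by rw [hsgeq, TS.initSeg_length]
  have hflist : TS.flist (initSeg (join f (join Φ₀.graph Ψ₀.graph)) (n + 1)) (TS.cK n)
      = initSeg f kc := by
    rw [hcK]; exact TS.flist_join (by omega)
  have hrho : TS.rho (initSeg (join f (join Φ₀.graph Ψ₀.graph)) (n + 1)) (TS.sg n)
      = initSeg (join f (TS.gExt [] p a')) (2 * k₀) := by
    rw [hsgeq]
    have hr := TS.rho_join (f := f) (G := Φ₀.graph) (H := Ψ₀.graph)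
      (g := TS.gExt [] p a') (m := n + 1) (σ := initSeg (TS.gExt [] p a') k₀)
      (by rw [TS.initSeg_length]) (by rw [TS.initSeg_length]; omega)
    rw [hr, TS.initSeg_length]
  have hval : TS.valid (initSeg (join f (join Φ₀.graph Ψ₀.graph)) (n + 1)) n = true := by
    unfold TS.valid
    simp only [Bool.and_eq_true]
    refine ⟨⟨⟨⟨⟨decide_eq_true (by omega), decide_eq_true (by rw [hlen]; omega)⟩, ?_⟩,
      ?_⟩, decide_eq_true ?_⟩, decide_eq_true ?_⟩
    · -- binary check
      refine (TS.foldr_and_iff _ _).2 fun v hv => ?_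
      rw [hsgeq] at hv
      obtain ⟨t, _, rfl⟩ := List.mem_map.1 hv
      refine decide_eq_true ?_
      rw [hg₀val]
      by_cases hpt : p t = a' <;> simp [hpt]
    · -- color check
      refine (TS.foldr_and_iff _ _).2 fun i hi => ?_
      rw [hlen] at hi
      have hik : i < k₀ := List.mem_range.1 hi
      rw [Bool.or_eq_true]
      by_cases hσi : (TS.sg n).getD i 0 = 1
      · have hgi : TS.gExt [] p a' i = 1 := by
          have hrd : TS.rd (initSeg (TS.gExt [] p a') k₀) i = TS.gExt [] p a' i :=
            TS.initSeg_getD hik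
          rw [← hrd, TS.rd]
          rw [hsgeq] at hσi
          exact hσi
        have hpi : p i = a' := by
          rw [hg₀val] at hgi
          by_cases hpt : p i = a'
          · exact hpt
          · rw [if_neg hpt] at hgi; omega
        have hguard : 4 * Nat.pair (Encodable.encode
            (TS.flist (initSeg (join f (join Φ₀.graph Ψ₀.graph)) (n + 1)) (TS.cK n))) i + 1
            < n := by
          rw [hflist]
          have := TS.pair_le_right (Encodable.encode (initSeg f kc)) (le_of_lt hik)
          omega
        have hread : TS.rd (initSeg (join f (join Φ₀.graph Ψ₀.graph)) (n + 1))
            (4 * Nat.pair (Encodable.encode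
              (TS.flist (initSeg (join f (join Φ₀.graph Ψ₀.graph)) (n + 1)) (TS.cK n))) i + 1)
            = TS.cA n + 1 := by
          have hlt : 4 * Nat.pair (Encodable.encode (initSeg f kc)) i + 1 < n + 1 := by
            have := TS.pair_le_right (Encodable.encode (initSeg f kc)) (le_of_lt hik)
            omega
          rw [hflist, TS.rd_join_G hlt, TS.graph_eval, hkc i hik, hpi, hcA]
          simp [Encodable.encode_some]
        refine Or.inr ?_
        rw [Bool.and_eq_true]
        exact ⟨decide_eq_true hguard, decide_eq_true hread⟩
      · refine Or.inl ?_
        rw [decide_eq_false hσi]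
        rfl
    · -- guard for the Ψ read
      rw [hrho]
      omega
    · -- the Ψ read
      rw [hrho, TS.rd_join_H (by omega), TS.graph_eval, hψeval, hcY]
      simp [Encodable.encode_some]
  obtain ⟨y₀, hy₀⟩ := TS.search_exists
    (τ := initSeg (join f (join Φ₀.graph Ψ₀.graph)) (n + 1))
    (A := List.range (initSeg (join f (join Φ₀.graph Ψ₀.graph)) (n + 1)).length)
    ⟨n, List.mem_range.2 (by rw [TS.initSeg_length]; omega), hval⟩
  obtain ⟨n₀, hn₀mem, hn₀val, hy₀eq⟩ := TS.search_sound hy₀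
  subst hy₀eq
  have hn₀lt : n₀ < n + 1 := by
    have hm := List.mem_range.1 hn₀mem
    rwa [TS.initSeg_length] at hm
  refine ⟨natSeq (TS.cY n₀), ?_, sound (n + 1) n₀ hn₀lt hn₀val⟩
  intro x
  by_cases hx : x = 0
  · subst hx
    refine ⟨n + 1, ?_⟩
    show TS.searchEval _ 0 = _
    unfold TS.searchEval
    rw [if_pos rfl]
    simpa [natSeq] using hy₀
  · exact ⟨0, by simp [TS.searchEval, hx, natSeq]⟩
end
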